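/- If Γ is a closed, subdegree finite group of permutations of a countable set S, then Γ is locally compact in the permutation topology; more specifically, every ball of radius ρ < 1 with respect to the ultrametric δ is compact. -/

import Mathlib

/-- The confluent of two permutations with respect to an exhausting sequence `A` of finite
subsets of `S`: the least index `i` such that `γ₁ γ₂⁻¹` moves some point of `A i`
(so `γ₁` and `γ₂` have confluent `≥ i` iff `γ₁ γ₂⁻¹` fixes `A (i-1)` pointwise). -/
noncomputable def conf {S : Type*} (A : ℕ → Finset S) (γ₁ γ₂ : Equiv.Perm S) : ℕ :=
  sInf {i : ℕ | ∃ s ∈ A i, γ₁ (γ₂⁻¹ s) ≠ s}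

/- The ultrametric distance: `0` if the permutations are equal, `2^{-conf}` otherwise. -/
open Classical in
noncomputable def pdist {S : Type*} (A : ℕ → Finset S) (γ₁ γ₂ : Equiv.Perm S) : ℝ :=
  if γ₁ = γ₂ then 0 else (1 / 2 : ℝ) ^ conf A γ₁ γ₂


/-- The ball of radius `ρ` around `γ` in `Γ`, with respect to the ultrametric `pdist`. -/
def ballIn {S : Type*} (Γ : Subgroup (Equiv.Perm S)) (A : ℕ → Finset S) (γ : Γ) (ρ : ℝ) :
    Set Γ :=
  {γ' : Γ | pdist A (γ : Equiv.Perm S) (γ' : Equiv.Perm S) ≤ ρ}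


/-- `Γ` is subdegree finite if every orbit of every point stabiliser is finite. -/
def SubdegreeFinite {S : Type*} (Γ : Subgroup (Equiv.Perm S)) : Prop :=
  ∀ s t : S, Set.Finite {u : S | ∃ γ ∈ Γ, γ s = s ∧ γ t = u}


/-- The permutation topology on `Equiv.Perm S`: the topology of pointwise convergence,
where `S` carries the discrete topology. -/
noncomputable def permTop (S : Type*) : TopologicalSpace (Equiv.Perm S) :=
  letI : TopologicalSpace S := ⊥
  TopologicalSpace.induced (fun g => (g : S → S)) Pi.topologicalSpace

/-- The permutation topology on a subgroup `Γ` of `Equiv.Perm S` (subspace topology). -/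
noncomputable def grpTop {S : Type*} (Γ : Subgroup (Equiv.Perm S)) :
    TopologicalSpace Γ :=
  (permTop S).induced (fun γ => (γ : Equiv.Perm S))

/-- The "agreement set" `B m γ`: elements of `Γ` whose value at `γ⁻¹ s` is `s`
for all `s ∈ A m`. -/
def Bset {S : Type*} (Γ : Subgroup (Equiv.Perm S)) (A : ℕ → Finset S) (m : ℕ) (γ : Γ) :
    Set Γ :=
  {γ' : Γ | ∀ s ∈ A m, (γ' : Equiv.Perm S) ((γ : Equiv.Perm S)⁻¹ s) = s}

theorem aux_compact {S : Type*} (Γ : Subgroup (Equiv.Perm S))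
    (hclosed : @IsClosed (Equiv.Perm S) (permTop S) (Γ : Set (Equiv.Perm S)))
    (hsd : SubdegreeFinite Γ) {A : ℕ → Finset S}
    (hexh : ∀ s : S, ∃ i, s ∈ A i) {a : S} {m : ℕ} (ha : a ∈ A m) (γ : Γ) :
    @IsCompact Γ (grpTop Γ) (Bset Γ A m γ) := by
  classical
  letI : TopologicalSpace S := ⊥
  haveI : DiscreteTopology S := ⟨rfl⟩
  letI tP : TopologicalSpace (Equiv.Perm S) := permTop S
  letI tG : TopologicalSpace Γ := grpTop Γ
  set f : Γ → (S → S) := fun δ => ⇑(δ : Equiv.Perm S) with hf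
  have hind : Topology.IsInducing f := by
    constructor
    show grpTop Γ = _
    rw [grpTop, permTop, induced_compose]
    rfl
  set B : Set Γ := Bset Γ A m γ with hB
  -- membership facts
  have hβ : ∀ δ : Γ, δ ∈ B →
      ((δ : Equiv.Perm S) * (γ : Equiv.Perm S)⁻¹) ∈ Γ ∧
        ((δ : Equiv.Perm S) * (γ : Equiv.Perm S)⁻¹) a = a := by
    intro δ hδ
    refine ⟨mul_mem δ.2 (inv_mem γ.2), ?_⟩
    simpa using hδ a ha
  -- the compact ambient set
  set K : Set (S → S) :=
    Set.pi Set.univ (fun s => {u | ∃ ζ ∈ Γ, ζ a = a ∧ ζ ((γ : Equiv.Perm S) s) = u}) with hK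
  have hKcompact : IsCompact K :=
    isCompact_univ_pi fun s => (hsd a ((γ : Equiv.Perm S) s)).isCompact
  have hsub : f '' B ⊆ K := by
    rintro _ ⟨δ, hδ, rfl⟩ s -
    exact ⟨(δ : Equiv.Perm S) * (γ : Equiv.Perm S)⁻¹, (hβ δ hδ).1, (hβ δ hδ).2, by simp [hf]⟩
  -- approximation from closure
  have happrox : ∀ g, g ∈ closure (f '' B) → ∀ F : Finset S,
      ∃ δ : Γ, δ ∈ B ∧ ∀ x ∈ F, (δ : Equiv.Perm S) x = g x := by
    intro g hg F
    have hU : IsOpen {h : S → S | ∀ x ∈ F, h x = g x} := by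
      have : {h : S → S | ∀ x ∈ F, h x = g x} = ⋂ x ∈ F, (fun h : S → S => h x) ⁻¹' {g x} := by
        ext h; simp
      rw [this]
      exact isOpen_biInter_finset fun x _ =>
        (continuous_apply x).isOpen_preimage _ (isOpen_discrete _)
    obtain ⟨h, hh1, δ, hδB, rfl⟩ :=
      mem_closure_iff.mp hg _ hU (fun x _ => rfl)
    exact ⟨δ, hδB, fun x hx => hh1 x hx⟩
  have hclosure : closure (f '' B) ⊆ f '' B := by
    intro g hg
    have hinj : Function.Injective g := by
      intro x y hxy
      by_contra hne
      obtain ⟨δ, -, hδ⟩ := happrox g hg {x, y}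
      have hx := hδ x (by simp)
      have hy := hδ y (by simp)
      exact hne ((δ : Equiv.Perm S).injective (by rw [hx, hy, hxy]))
    have hsurj : Function.Surjective g := by
      intro t
      have hfin : Set.Finite
          ((fun u => (γ : Equiv.Perm S)⁻¹ u) '' {u | ∃ ζ ∈ Γ, ζ a = a ∧ ζ t = u}) :=
        (hsd a t).image _
      by_contra hno
      push_neg at hno
      obtain ⟨δ, hδB, hδ⟩ := happrox g hg hfin.toFinset
      have hmem : (δ : Equiv.Perm S)⁻¹ t ∈ hfin.toFinset := by
        rw [Set.Finite.mem_toFinset]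
        refine ⟨(γ : Equiv.Perm S) ((δ : Equiv.Perm S)⁻¹ t),
          ⟨(γ : Equiv.Perm S) * (δ : Equiv.Perm S)⁻¹, mul_mem γ.2 (inv_mem δ.2), ?_, by simp⟩,
          by simp⟩
        have := (hβ δ hδB).2
        -- β a = a with β = δ * γ⁻¹ ; we need (γ * δ⁻¹) a = a
        have h2 : (δ : Equiv.Perm S) ((γ : Equiv.Perm S)⁻¹ a) = a := by simpa using this
        have h3 : (δ : Equiv.Perm S)⁻¹ a = (γ : Equiv.Perm S)⁻¹ a := by
          conv_lhs => rw [← h2]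
          simp
        simp only [Equiv.Perm.coe_mul, Function.comp_apply]
        rw [h3]
        simp
      have hgt := hδ _ hmem
      rw [show (δ : Equiv.Perm S) ((δ : Equiv.Perm S)⁻¹ t) = t by simp] at hgt
      exact hno _ hgt.symm
    have hcond : ∀ s ∈ A m, g ((γ : Equiv.Perm S)⁻¹ s) = s := by
      intro s hs
      obtain ⟨δ, hδB, hδ⟩ := happrox g hg ((A m).image fun s => (γ : Equiv.Perm S)⁻¹ s)
      have := hδ ((γ : Equiv.Perm S)⁻¹ s) (Finset.mem_image_of_mem _ hs)
      rw [← this]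
      exact hδB s hs
    set σ : Equiv.Perm S := Equiv.ofBijective g ⟨hinj, hsurj⟩ with hσ
    have hσg : ⇑σ = g := rfl
    have hind2 : Topology.IsInducing (fun p : Equiv.Perm S => ⇑p) := ⟨rfl⟩
    have hσΓ : σ ∈ Γ := by
      have h1 : σ ∈ closure (Γ : Set (Equiv.Perm S)) := by
        rw [hind2.closure_eq_preimage_closure_image]
        have h2 : (f '' B) ⊆ (fun p : Equiv.Perm S => ⇑p) '' (Γ : Set (Equiv.Perm S)) := by
          rintro _ ⟨δ, -, rfl⟩; exact ⟨δ, δ.2, rfl⟩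
        exact Set.mem_preimage.mpr (closure_mono h2 (hσg ▸ hg))
      exact hclosed.closure_subset h1
    exact ⟨⟨σ, hσΓ⟩, fun s hs => hcond s hs, rfl⟩
  have hBclosed : IsClosed (f '' B) := isClosed_of_closure_subset hclosure
  rw [hind.isCompact_iff]
  exact hKcompact.of_isClosed_subset hBclosed hsub

/-- If `Γ` is a closed, subdegree finite group of permutations of a countable set, then `Γ`
is locally compact in the permutation topology; more specifically, every ball of radius
`ρ < 1` with respect to the ultrametric `pdist` is compact. -/
theorem locally_compact_and_balls_compact {S : Type*} [Countable S]
    (Γ : Subgroup (Equiv.Perm S))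
    (hclosed : @IsClosed (Equiv.Perm S) (permTop S) (Γ : Set (Equiv.Perm S)))
    (hsd : SubdegreeFinite Γ) (A : ℕ → Finset S) (hmono : Monotone A)
    (hexh : ∀ s : S, ∃ i, s ∈ A i) (h0 : (A 0).Nonempty) :
    @LocallyCompactSpace Γ (grpTop Γ) ∧
      ∀ ρ : ℝ, ρ < 1 → ∀ γ : Γ, @IsCompact Γ (grpTop Γ) (ballIn Γ A γ ρ) := by
  classical
  letI : TopologicalSpace S := ⊥
  haveI : DiscreteTopology S := ⟨rfl⟩
  letI tP : TopologicalSpace (Equiv.Perm S) := permTop S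
  letI tG : TopologicalSpace Γ := grpTop Γ
  obtain ⟨a, ha0⟩ := h0
  have hBcompact : ∀ (m : ℕ) (γ : Γ), IsCompact (Bset Γ A m γ) :=
    fun m γ => aux_compact Γ hclosed hsd hexh (hmono (Nat.zero_le m) ha0) γ
  set f : Γ → (S → S) := fun δ => ⇑(δ : Equiv.Perm S) with hf
  have hind : Topology.IsInducing f := by
    constructor
    show grpTop Γ = _
    rw [grpTop, permTop, induced_compose]
    rfl
  have hBopen : ∀ (m : ℕ) (γ : Γ), IsOpen (Bset Γ A m γ) := by
    intro m γ
    have : Bset Γ A m γ =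
        f ⁻¹' (⋂ s ∈ A m, (fun h : S → S => h ((γ : Equiv.Perm S)⁻¹ s)) ⁻¹' {s}) := by
      ext δ; simp [Bset, hf]
    rw [this]
    exact (isOpen_biInter_finset fun s _ =>
      (continuous_apply _).isOpen_preimage _ (isOpen_discrete _)).preimage hind.continuous
  have hBmem : ∀ (m : ℕ) (γ : Γ), γ ∈ Bset Γ A m γ := fun m γ s hs => by simp
  -- key equivalence: the condition of Bset in terms of conf
  have hconv : ∀ (γ γ' : Γ) (s : S),
      (γ' : Equiv.Perm S) ((γ : Equiv.Perm S)⁻¹ s) = s ↔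
        (γ : Equiv.Perm S) ((γ' : Equiv.Perm S)⁻¹ s) = s := by
    intro γ γ' s
    constructor
    · intro h
      have : (γ' : Equiv.Perm S)⁻¹ s = (γ : Equiv.Perm S)⁻¹ s := by
        conv_lhs => rw [← h]
        simp
      rw [this]; simp
    · intro h
      have : (γ : Equiv.Perm S)⁻¹ s = (γ' : Equiv.Perm S)⁻¹ s := by
        conv_lhs => rw [← h]
        simp
      rw [this]; simp
  -- ball characterization for 0 < ρ < 1
  have hball : ∀ ρ : ℝ, 0 < ρ → ρ < 1 → ∀ γ : Γ, ∃ m : ℕ, ballIn Γ A γ ρ = Bset Γ A m γ := by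
    intro ρ hρ0 hρ1 γ
    have hex : ∃ n : ℕ, (1 / 2 : ℝ) ^ n ≤ ρ := by
      obtain ⟨n, hn⟩ := exists_pow_lt_of_lt_one hρ0 (by norm_num : (1 / 2 : ℝ) < 1)
      exact ⟨n, hn.le⟩
    set n₀ := Nat.find hex with hn₀
    have hn₀spec : (1 / 2 : ℝ) ^ n₀ ≤ ρ := Nat.find_spec hex
    have hn₀pos : 0 < n₀ := by
      rcases Nat.eq_zero_or_pos n₀ with h | h
      · exfalso; rw [h] at hn₀spec; simp at hn₀spec; linarith
      · exact h
    set m := n₀ - 1 with hm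
    have hmn : m + 1 = n₀ := Nat.succ_pred_eq_of_pos hn₀pos
    have hρlt : ρ < (1 / 2 : ℝ) ^ m := by
      by_contra h
      push_neg at h
      have : n₀ ≤ m := Nat.find_le h
      omega
    refine ⟨m, ?_⟩
    ext γ'
    simp only [ballIn, Bset, Set.mem_setOf_eq]
    constructor
    · intro hle s hs
      by_cases heq : (γ : Equiv.Perm S) = (γ' : Equiv.Perm S)
      · rw [← heq]; simp
      · rw [pdist, if_neg heq] at hle
        have hconf : m < conf A (γ : Equiv.Perm S) (γ' : Equiv.Perm S) := by
          by_contra h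
          push_neg at h
          have : (1 / 2 : ℝ) ^ m ≤ (1 / 2 : ℝ) ^ conf A (γ : Equiv.Perm S) (γ' : Equiv.Perm S) :=
            pow_le_pow_of_le_one (by norm_num) (by norm_num) h
          linarith
        rw [hconv]
        by_contra hne
        have hmemT : m ∈ {i : ℕ | ∃ s ∈ A i, (γ : Equiv.Perm S) ((γ' : Equiv.Perm S)⁻¹ s) ≠ s} :=
          ⟨s, hs, hne⟩
        exact absurd (Nat.sInf_le hmemT) (by exact Nat.not_le.mpr hconf)
    · intro hB
      by_cases heq : (γ : Equiv.Perm S) = (γ' : Equiv.Perm S)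
      · rw [pdist, if_pos heq]; linarith
      · rw [pdist, if_neg heq]
        have hTne : {i : ℕ | ∃ s ∈ A i, (γ : Equiv.Perm S) ((γ' : Equiv.Perm S)⁻¹ s) ≠ s}.Nonempty := by
          have : ∃ x, (γ : Equiv.Perm S) x ≠ (γ' : Equiv.Perm S) x := by
            by_contra h
            push_neg at h
            exact heq (Equiv.ext h)
          obtain ⟨x, hx⟩ := this
          obtain ⟨i, hi⟩ := hexh ((γ' : Equiv.Perm S) x)
          exact ⟨i, (γ' : Equiv.Perm S) x, hi, by simpa using hx⟩
        have hconf : m + 1 ≤ conf A (γ : Equiv.Perm S) (γ' : Equiv.Perm S) := by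
          by_contra h
          push_neg at h
          have hmemT : ∃ s ∈ A (conf A (γ : Equiv.Perm S) (γ' : Equiv.Perm S)),
              (γ : Equiv.Perm S) ((γ' : Equiv.Perm S)⁻¹ s) ≠ s := Nat.sInf_mem hTne
          obtain ⟨s, hs, hne⟩ := hmemT
          have hsm : s ∈ A m := hmono (by omega) hs
          exact hne ((hconv γ γ' s).mp (hB s hsm))
        calc (1 / 2 : ℝ) ^ conf A (γ : Equiv.Perm S) (γ' : Equiv.Perm S)
            ≤ (1 / 2 : ℝ) ^ (m + 1) := pow_le_pow_of_le_one (by norm_num) (by norm_num) hconf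
          _ = (1 / 2 : ℝ) ^ n₀ := by rw [hmn]
          _ ≤ ρ := hn₀spec
  -- balls of radius < 1 are compact
  have hballs : ∀ ρ : ℝ, ρ < 1 → ∀ γ : Γ, IsCompact (ballIn Γ A γ ρ) := by
    intro ρ hρ1 γ
    rcases lt_trichotomy ρ 0 with h | h | h
    · have : ballIn Γ A γ ρ = ∅ := by
        ext γ'
        simp only [ballIn, Set.mem_setOf_eq, Set.mem_empty_iff_false, iff_false, not_le]
        rw [pdist]
        split
        · linarith
        · exact lt_of_lt_of_le h (pow_nonneg (by norm_num) _)
      rw [this]; exact isCompact_empty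
    · have : ballIn Γ A γ ρ = {γ} := by
        ext γ'
        simp only [ballIn, Set.mem_setOf_eq, Set.mem_singleton_iff]
        rw [pdist]
        split
        · rename_i heq
          simp [h, Subtype.ext heq.symm]
        · rename_i hne
          constructor
          · intro hle
            exfalso
            have : (0 : ℝ) < (1 / 2 : ℝ) ^ conf A (γ : Equiv.Perm S) (γ' : Equiv.Perm S) :=
              pow_pos (by norm_num) _
            rw [h] at hle; linarith
          · intro heq; exact absurd (congrArg (fun x : Γ => (x : Equiv.Perm S)) heq.symm) hne
      rw [this]; exact isCompact_singleton
    · obtain ⟨m, hm⟩ := hball ρ h hρ1 γ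
      rw [hm]; exact hBcompact m γ
  refine ⟨⟨?_⟩, hballs⟩
  intro γ N hN
  rw [hind.nhds_eq_comap, Filter.mem_comap] at hN
  obtain ⟨U, hU, hUN⟩ := hN
  rw [nhds_pi] at hU
  obtain ⟨I, t, ht, htU⟩ := Filter.mem_pi'.mp hU
  choose idx hidx using hexh
  set m := I.sup fun x => idx ((γ : Equiv.Perm S) x) with hmdef
  have hsubN : Bset Γ A m γ ⊆ N := by
    intro δ hδ
    apply hUN
    apply htU
    intro x hx
    have hxI : x ∈ I := hx
    have hAm : (γ : Equiv.Perm S) x ∈ A m :=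
      hmono (Finset.le_sup hxI) (hidx ((γ : Equiv.Perm S) x))
    have := hδ _ hAm
    rw [show (γ : Equiv.Perm S)⁻¹ ((γ : Equiv.Perm S) x) = x by simp] at this
    show f δ x ∈ t x
    rw [show f δ x = (δ : Equiv.Perm S) x from rfl, this]
    have := ht x
    rw [nhds_discrete, Filter.mem_pure] at this
    exact this
  exact ⟨Bset Γ A m γ, (hBopen m γ).mem_nhds (hBmem m γ), hsubN, hBcompact m γ⟩
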